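/- Let n ≥ 1, let θ₀ ≠ θ₁ be real numbers, and let x = (x₁, …, xₙ) ∈ ℝⁿ be such that σ̂ⱼ² := (1/n) ∑_{i=1}^{n} (xᵢ − θⱼ)² > 0 for j = 0, 1. Set L̂ⱼ = (2π σ̂ⱼ²)^{-n/2} exp(−n/2), and for any fixed v > 0 set Lⱼ(v) = ∏_{i=1}^{n} (2πv)^{-1/2} exp(−(xᵢ − θⱼ)²/(2v)). Then L̂₁ ≥ L̂₀ if and only if L₁(v) ≥ L₀(v). Hence the proposed test for unknown variance is equivalent to the optimum test for known variance: one gets the same test minimizing the sum of the two error probabilities irrespective of whether σ² is known or unknown. -/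

import Mathlib

open Real Finset

/-- The proposed test for the mean of a normal population with unknown
variance (based on maximized likelihoods `L̂₁ ≥ L̂₀`) is equivalent to the optimum
test for known variance (`L₁(v) ≥ L₀(v)` for any fixed `v > 0`): one gets the same
test minimizing the sum of the two error probabilities irrespective of whether the
variance is known or unknown. -/
theorem proposed_test_equivalent_to_optimum_test
    (n : ℕ) (hn : 1 ≤ n) (θ₀ θ₁ : ℝ) (hθ : θ₀ ≠ θ₁) (x : Fin n → ℝ)
    (s₀ s₁ : ℝ)
    (hs₀ : s₀ = (∑ i, (x i - θ₀)^2) / n) (hs₁ : s₁ = (∑ i, (x i - θ₁)^2) / n)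
    (hs₀_pos : 0 < s₀) (hs₁_pos : 0 < s₁)
    (Lhat₀ Lhat₁ : ℝ)
    (hLhat₀ : Lhat₀ = (2 * π * s₀) ^ (-(n : ℝ)/2) * exp (-(n : ℝ)/2))
    (hLhat₁ : Lhat₁ = (2 * π * s₁) ^ (-(n : ℝ)/2) * exp (-(n : ℝ)/2))
    (v : ℝ) (hv : 0 < v) (L₀ L₁ : ℝ)
    (hL₀ : L₀ = ∏ i, (2 * π * v) ^ (-(1/2) : ℝ) * exp (-(x i - θ₀)^2 / (2*v)))
    (hL₁ : L₁ = ∏ i, (2 * π * v) ^ (-(1/2) : ℝ) * exp (-(x i - θ₁)^2 / (2*v))) :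
    Lhat₀ ≤ Lhat₁ ↔ L₀ ≤ L₁ := by
  have hπ : (0:ℝ) < 2 * π := by positivity
  have hnpos : (0:ℝ) < n := by exact_mod_cast hn
  -- Lhat side reduces to s₁ ≤ s₀
  have hLhat : Lhat₀ ≤ Lhat₁ ↔ s₁ ≤ s₀ := by
    rw [hLhat₀, hLhat₁, mul_le_mul_iff_left₀ (exp_pos _),
      Real.rpow_le_rpow_iff_of_neg (by positivity) (by positivity)
        (by rw [div_neg_iff]; right; constructor <;> [linarith; norm_num]),
      mul_le_mul_iff_right₀ hπ]
  -- L side reduces to sum ≤ sum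
  have key : ∀ θ : ℝ,
      (∏ i, (2 * π * v) ^ (-(1/2) : ℝ) * exp (-(x i - θ)^2 / (2*v)))
        = (2 * π * v) ^ (-(n : ℝ)/2) * exp (-(∑ i, (x i - θ)^2) / (2*v)) := by
    intro θ
    rw [Finset.prod_mul_distrib, Finset.prod_const, ← Real.exp_sum]
    congr 1
    · rw [← Real.rpow_natCast ((2*π*v) ^ (-(1/2):ℝ)), ← Real.rpow_mul (by positivity)]
      norm_num
      ring_nf
    · rw [← Finset.sum_div, ← Finset.sum_neg_distrib]
  have hL : L₀ ≤ L₁ ↔ (∑ i, (x i - θ₁)^2) ≤ (∑ i, (x i - θ₀)^2) := by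
    rw [hL₀, hL₁, key, key, mul_le_mul_iff_right₀ (by positivity), Real.exp_le_exp,
      div_le_div_iff_of_pos_right (by positivity), neg_le_neg_iff]
  rw [hLhat, hL, hs₀, hs₁, div_le_div_iff_of_pos_right hnpos]
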